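/- Let w : ℕ × ℕ → [0,∞) be a c₀-graph and let T be its associated operator on c₀. Then for every n ≥ 1, ‖T^n‖ = sup_{v∈ℕ} Σ_{u∈ℕ} Σ_{p} w(p), where the inner sum runs over all paths p from u to v of length n. -/
import Mathlib


open Filter ZeroAtInftyContinuousMap
open scoped ZeroAtInfty ENNReal

/-- The weight of a path `p = (p 0, …, p n)` in the weighted graph `(ℕ, w)`:
the product `∏_{k=1}^n w(p_{k−1}, p_k)`. -/
def pathWeight (w : ℕ × ℕ → ℝ) {n : ℕ} (p : Fin (n + 1) → ℕ) : ℝ :=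
  ∏ k : Fin n, w (p k.castSucc, p k.succ)

namespace NPGaux

/-- the `ℝ≥0∞`-valued total weight of paths from `u` to `v` of length `n`. -/
noncomputable def En (w : ℕ × ℕ → ℝ) (n u v : ℕ) : ℝ≥0∞ :=
  ∑' p : {p : Fin (n + 1) → ℕ // p 0 = u ∧ p (Fin.last n) = v},
    ∏ k : Fin n, ENNReal.ofReal (w (p.1 k.castSucc, p.1 k.succ))

lemma En_zero (w : ℕ × ℕ → ℝ) (u v : ℕ) :
    En w 0 u v = if u = v then 1 else 0 := by
  unfold En
  by_cases h : u = v
  · subst h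
    rw [if_pos rfl]
    have hu : Unique {p : Fin 1 → ℕ // p 0 = u ∧ p (Fin.last 0) = u} := by
      refine ⟨⟨⟨fun _ => u, rfl, rfl⟩⟩, ?_⟩
      rintro ⟨p, hp0, hpl⟩
      ext i
      have : i = 0 := Subsingleton.elim _ _
      simp [this, hp0]
    rw [tsum_eq_single (hu.default) (fun b hb => absurd (hu.uniq b ▸ rfl) hb)]
    simp
  · rw [if_neg h]
    have : IsEmpty {p : Fin 1 → ℕ // p 0 = u ∧ p (Fin.last 0) = v} := by
      constructor
      rintro ⟨p, hp0, hpl⟩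
      exact h (hp0 ▸ hpl ▸ rfl)
    exact tsum_empty

/-- Decomposition of a path of length `n+1` at its last edge. -/
noncomputable def pathEquiv (n u v : ℕ) :
    {p : Fin (n + 2) → ℕ // p 0 = u ∧ p (Fin.last (n + 1)) = v} ≃
      Σ u' : ℕ, {q : Fin (n + 1) → ℕ // q 0 = u ∧ q (Fin.last n) = u'} where
  toFun p := ⟨p.1 (Fin.last n).castSucc,
    ⟨p.1 ∘ Fin.castSucc, by simpa using p.2.1, rfl⟩⟩
  invFun s := ⟨Fin.snoc s.2.1 v, by
    constructor
    · have : (0 : Fin (n + 2)) = Fin.castSucc 0 := rfl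
      rw [this, Fin.snoc_castSucc]
      exact s.2.2.1
    · simp⟩
  left_inv p := by
    ext i
    refine Fin.lastCases ?_ (fun j => ?_) i
    · simp [p.2.2]
    · simp
  right_inv s := by
    obtain ⟨u', q, hq0, hql⟩ := s
    have h1 : (Fin.snoc q v : Fin (n + 2) → ℕ) (Fin.last n).castSucc = u' := by
      rw [Fin.snoc_castSucc]; exact hql
    refine Sigma.ext h1 ((Subtype.heq_iff_coe_eq ?_).mpr ?_)
    · intro x
      show (x 0 = u ∧ x (Fin.last n) = (Fin.snoc q v : Fin (n + 2) → ℕ) (Fin.last n).castSucc) ↔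
        (x 0 = u ∧ x (Fin.last n) = u')
      rw [h1]
    · funext i
      show (Fin.snoc q v : Fin (n + 2) → ℕ) i.castSucc = q i
      rw [Fin.snoc_castSucc]

lemma En_succ (w : ℕ × ℕ → ℝ) (n u v : ℕ) :
    En w (n + 1) u v = ∑' u' : ℕ, En w n u u' * ENNReal.ofReal (w (u', v)) := by
  unfold En
  rw [← Equiv.tsum_eq (pathEquiv n u v).symm, ENNReal.tsum_sigma']
  congr 1
  ext u'
  rw [← ENNReal.tsum_mul_right]
  congr 1
  ext q
  show (∏ k : Fin (n + 1),
      ENNReal.ofReal (w ((Fin.snoc q.1 v : Fin (n+2) → ℕ) k.castSucc,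
        (Fin.snoc q.1 v : Fin (n+2) → ℕ) k.succ)))
    = _
  rw [Fin.prod_univ_castSucc]
  congr 1
  · apply Finset.prod_congr rfl
    intro k _
    rw [Fin.succ_castSucc, Fin.snoc_castSucc, Fin.snoc_castSucc]
  · rw [Fin.succ_last, Fin.snoc_last, Fin.snoc_castSucc, q.2.2]


section

variable (w : ℕ × ℕ → ℝ) (hw : ∀ q : ℕ × ℕ, 0 ≤ w q)
  (hsum : ∀ u : ℕ, Summable fun k : ℕ => w (k, u))
  (c : ℝ) (hc : ∀ u : ℕ, ∑' k : ℕ, w (k, u) ≤ c)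

include hw hsum hc in
lemma edge_col (v : ℕ) : ∑' k : ℕ, ENNReal.ofReal (w (k, v)) ≤ ENNReal.ofReal c := by
  rw [← ENNReal.ofReal_tsum_of_nonneg (fun k => hw _) (hsum v)]
  exact ENNReal.ofReal_le_ofReal (hc v)

include hw hsum hc in
lemma En_col_le : ∀ n v : ℕ, ∑' u : ℕ, En w n u v ≤ ENNReal.ofReal c ^ n := by
  intro n
  induction n with
  | zero =>
    intro v
    simp only [En_zero, pow_zero]
    rw [tsum_ite_eq]
  | succ n ih =>
    intro v
    calc ∑' u : ℕ, En w (n + 1) u v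
        = ∑' u : ℕ, ∑' u' : ℕ, En w n u u' * ENNReal.ofReal (w (u', v)) := by
          exact tsum_congr fun u => En_succ w n u v
      _ = ∑' u' : ℕ, (∑' u : ℕ, En w n u u') * ENNReal.ofReal (w (u', v)) := by
          rw [ENNReal.tsum_comm]
          exact tsum_congr fun u' => ENNReal.tsum_mul_right
      _ ≤ ∑' u' : ℕ, ENNReal.ofReal c ^ n * ENNReal.ofReal (w (u', v)) :=
          ENNReal.tsum_le_tsum fun u' => mul_le_mul_left (ih u') _
      _ = ENNReal.ofReal c ^ n * ∑' u' : ℕ, ENNReal.ofReal (w (u', v)) :=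
          ENNReal.tsum_mul_left
      _ ≤ ENNReal.ofReal c ^ n * ENNReal.ofReal c :=
          mul_le_mul_right (edge_col w hw hsum c hc v) _
      _ = ENNReal.ofReal c ^ (n + 1) := (pow_succ _ _).symm

include hw hsum hc in
lemma En_ne_top (n u v : ℕ) : En w n u v ≠ ⊤ :=
  ne_top_of_le_ne_top (ENNReal.pow_ne_top ENNReal.ofReal_ne_top)
    ((ENNReal.le_tsum u).trans (En_col_le w hw hsum c hc n v))

/-- Real-valued kernel of `T ^ n`. -/
noncomputable def K (n u v : ℕ) : ℝ := (En w n u v).toReal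

lemma K_nonneg (n u v : ℕ) : 0 ≤ K w n u v := ENNReal.toReal_nonneg

include hw in
lemma pathSum (n u v : ℕ) :
    ∑' p : {p : Fin (n + 1) → ℕ // p 0 = u ∧ p (Fin.last n) = v},
      pathWeight w p.1 = K w n u v := by
  rw [K, En, ENNReal.tsum_toReal_eq]
  · exact tsum_congr fun p => by
      rw [← ENNReal.ofReal_prod_of_nonneg (fun k _ => hw _),
        ENNReal.toReal_ofReal (Finset.prod_nonneg fun k _ => hw _)]
      rfl
  · intro p
    rw [← ENNReal.ofReal_prod_of_nonneg (fun k _ => hw _)]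
    exact ENNReal.ofReal_ne_top

lemma K_zero (u v : ℕ) : K w 0 u v = if u = v then 1 else 0 := by
  rw [K, En_zero]
  split <;> simp

include hw hsum hc in
lemma summable_K_col (n v : ℕ) : Summable fun u => K w n u v :=
  ENNReal.summable_toReal
    (ne_top_of_le_ne_top (ENNReal.pow_ne_top ENNReal.ofReal_ne_top)
      (En_col_le w hw hsum c hc n v))

include hw hsum hc in
lemma tsum_K_col (n v : ℕ) :
    ∑' u : ℕ, K w n u v = (∑' u : ℕ, En w n u v).toReal :=
  (ENNReal.tsum_toReal_eq fun u => En_ne_top w hw hsum c hc n u v).symm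

include hw hsum hc in
lemma tsum_K_col_le (hc0 : 0 ≤ c) (n v : ℕ) : ∑' u : ℕ, K w n u v ≤ c ^ n := by
  rw [tsum_K_col w hw hsum c hc]
  calc (∑' u : ℕ, En w n u v).toReal
      ≤ (ENNReal.ofReal c ^ n).toReal :=
        ENNReal.toReal_mono (ENNReal.pow_ne_top ENNReal.ofReal_ne_top)
          (En_col_le w hw hsum c hc n v)
    _ = c ^ n := by rw [ENNReal.toReal_pow, ENNReal.toReal_ofReal hc0]

include hw hsum hc in
lemma K_succ (n u v : ℕ) :
    K w (n + 1) u v = ∑' u' : ℕ, K w n u u' * w (u', v) := by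
  rw [K, En_succ, ENNReal.tsum_toReal_eq fun u' =>
    ENNReal.mul_ne_top (En_ne_top w hw hsum c hc n u u') ENNReal.ofReal_ne_top]
  exact tsum_congr fun u' => by
    rw [ENNReal.toReal_mul, ENNReal.toReal_ofReal (hw _)]
    rfl

include hw hsum hc in
lemma summable_K_mul_w (n u v : ℕ) :
    Summable fun u' => K w n u u' * w (u', v) := by
  have h : (fun u' => K w n u u' * w (u', v)) =
      fun u' => (En w n u u' * ENNReal.ofReal (w (u', v))).toReal := by
    funext u'
    rw [ENNReal.toReal_mul, ENNReal.toReal_ofReal (hw _)]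
    rfl
  rw [h]
  apply ENNReal.summable_toReal
  rw [← En_succ]
  exact En_ne_top w hw hsum c hc (n + 1) u v

lemma abs_apply_le (x : C₀(ℕ, ℝ)) (u : ℕ) : |x u| ≤ ‖x‖ := by
  rw [← norm_toBCF_eq_norm]
  exact x.toBCF.norm_coe_le_norm u

include hw hsum hc in
lemma Tpow (T : C₀(ℕ, ℝ) →L[ℝ] C₀(ℕ, ℝ))
    (hT : ∀ (x : C₀(ℕ, ℝ)) (u : ℕ), T x u = ∑' m : ℕ, x m * w (m, u)) :
    ∀ (n : ℕ) (x : C₀(ℕ, ℝ)) (v : ℕ),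
      (T ^ n) x v = ∑' u : ℕ, x u * K w n u v := by
  intro n
  induction n with
  | zero =>
    intro x v
    rw [pow_zero]
    have : (1 : C₀(ℕ, ℝ) →L[ℝ] C₀(ℕ, ℝ)) x v = x v := rfl
    rw [this, tsum_eq_single v]
    · rw [K_zero, if_pos rfl, mul_one]
    · intro u hu
      rw [K_zero, if_neg hu, mul_zero]
  | succ n ih =>
    intro x v
    have habs : ∀ z : ℕ × ℕ, |x z.1 * K w n z.1 z.2 * w (z.2, v)| =
        |x z.1| * K w n z.1 z.2 * w (z.2, v) := by
      intro z
      rw [abs_mul, abs_mul, abs_of_nonneg (K_nonneg w n z.1 z.2),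
        abs_of_nonneg (hw (z.2, v))]
    have hsummable : Summable (Function.uncurry fun u u' =>
        x u * K w n u u' * w (u', v)) := by
      rw [← summable_abs_iff]
      have h0 : (0 : ℕ × ℕ → ℝ) ≤ fun z : ℕ × ℕ =>
          |x z.1 * K w n z.1 z.2 * w (z.2, v)| := fun z => abs_nonneg _
      rw [show (fun z : ℕ × ℕ => |Function.uncurry
          (fun u u' => x u * K w n u u' * w (u', v)) z|) =
          fun z : ℕ × ℕ => |x z.1 * K w n z.1 z.2 * w (z.2, v)| from rfl]
      rw [summable_prod_of_nonneg h0]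
      constructor
      · intro u
        refine ((summable_K_mul_w w hw hsum c hc n u v).mul_left |x u|).congr
          fun u' => ?_
        show |x u| * (K w n u u' * w (u', v)) = |x u * K w n u u' * w (u', v)|
        rw [habs (u, u')]
        ring
      · refine Summable.of_nonneg_of_le
          (fun u => tsum_nonneg fun u' => abs_nonneg _) (fun u => ?_)
          ((summable_K_col w hw hsum c hc (n + 1) v).mul_left ‖x‖)
        show ∑' u' : ℕ, |x u * K w n u u' * w (u', v)| ≤ ‖x‖ * K w (n + 1) u v
        have h1 : ∑' u' : ℕ, |x u * K w n u u' * w (u', v)| =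
            |x u| * ∑' u' : ℕ, K w n u u' * w (u', v) := by
          rw [← tsum_mul_left]
          exact tsum_congr fun u' => by rw [habs (u, u')]; ring
        rw [h1, ← K_succ w hw hsum c hc n u v]
        exact mul_le_mul_of_nonneg_right (abs_apply_le x u)
          (K_nonneg w (n + 1) u v)
    calc (T ^ (n + 1)) x v = T ((T ^ n) x) v := by rw [pow_succ']; rfl
      _ = ∑' u' : ℕ, ((T ^ n) x) u' * w (u', v) := hT _ v
      _ = ∑' u' : ℕ, (∑' u : ℕ, x u * K w n u u') * w (u', v) :=
          tsum_congr fun u' => by rw [ih]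
      _ = ∑' u' : ℕ, ∑' u : ℕ, x u * K w n u u' * w (u', v) :=
          tsum_congr fun u' => (tsum_mul_right).symm
      _ = ∑' u : ℕ, ∑' u' : ℕ, x u * K w n u u' * w (u', v) := Summable.tsum_comm hsummable
      _ = ∑' u : ℕ, x u * ∑' u' : ℕ, K w n u u' * w (u', v) := by
          refine tsum_congr fun u => ?_
          rw [← tsum_mul_left]
          exact tsum_congr fun u' => by ring
      _ = ∑' u : ℕ, x u * K w (n + 1) u v :=
          tsum_congr fun u => by rw [← K_succ w hw hsum c hc n u v]

end

/-- The indicator of a finite set, as an element of `C₀(ℕ, ℝ)`. -/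
noncomputable def indC (F : Finset ℕ) : C₀(ℕ, ℝ) where
  toFun := fun u => if u ∈ F then (1 : ℝ) else 0
  continuous_toFun := continuous_of_discreteTopology
  zero_at_infty' := by
    rw [cocompact_eq_atTop]
    have h : ∀ᶠ u : ℕ in atTop, (if u ∈ F then (1 : ℝ) else 0) = 0 := by
      rw [eventually_atTop]
      refine ⟨F.sup id + 1, fun u hu => if_neg fun hm => ?_⟩
      have := F.le_sup (f := id) hm
      simp only [id_eq] at this
      omega
    exact (tendsto_congr' h).mpr tendsto_const_nhds

lemma indC_apply (F : Finset ℕ) (u : ℕ) :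
    indC F u = if u ∈ F then (1 : ℝ) else 0 := rfl

lemma indC_norm_le (F : Finset ℕ) : ‖indC F‖ ≤ 1 := by
  rw [← norm_toBCF_eq_norm]
  refine BoundedContinuousFunction.norm_le zero_le_one |>.mpr fun u => ?_
  show ‖if u ∈ F then (1 : ℝ) else 0‖ ≤ 1
  split <;> simp

end NPGaux



open NPGaux

/-- Let `w : ℕ × ℕ → [0,∞)` be a `c₀`-graph (i.e. (a) `w(u, k) → 0` as
`k → ∞` for each `u` and (b) `sup_u ∑_k w(k, u) < ∞`) and let `T` be its associated
operator on `c₀ = C₀(ℕ, ℝ)`, `(T x)_u = ∑_n x_n · w(n, u)`. Then for every `n ≥ 1`,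
`‖T^n‖ = sup_v ∑_u ∑_p w(p)`, the inner sum running over all paths `p` from `u` to `v`
of length `n`. -/
theorem norm_pow_of_c0_graph_operator
    (w : ℕ × ℕ → ℝ) (hw : ∀ q : ℕ × ℕ, 0 ≤ w q)
    (ha : ∀ u : ℕ, Tendsto (fun k : ℕ => w (u, k)) atTop (nhds 0))
    (hsum : ∀ u : ℕ, Summable fun k : ℕ => w (k, u))
    (hbdd : BddAbove (Set.range fun u : ℕ => ∑' k : ℕ, w (k, u)))
    (T : C₀(ℕ, ℝ) →L[ℝ] C₀(ℕ, ℝ))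
    (hT : ∀ (x : C₀(ℕ, ℝ)) (u : ℕ), T x u = ∑' n : ℕ, x n * w (n, u)) :
    ∀ n : ℕ, 1 ≤ n →
      ‖T ^ n‖ = ⨆ v : ℕ, ∑' u : ℕ,
        ∑' p : {p : Fin (n + 1) → ℕ // p 0 = u ∧ p (Fin.last n) = v},
          pathWeight w p.1 := by
  intro n _
  obtain ⟨c, hcmem⟩ := hbdd
  have hc : ∀ u : ℕ, ∑' k : ℕ, w (k, u) ≤ c := fun u => hcmem ⟨u, rfl⟩
  have hc0 : 0 ≤ c := le_trans (tsum_nonneg fun k => hw _) (hc 0)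
  rw [show (⨆ v : ℕ, ∑' u : ℕ,
      ∑' p : {p : Fin (n + 1) → ℕ // p 0 = u ∧ p (Fin.last n) = v},
        pathWeight w p.1) = ⨆ v : ℕ, ∑' u : ℕ, K w n u v from
    iSup_congr fun v => tsum_congr fun u => pathSum w hw n u v]
  have hbddM : BddAbove (Set.range fun v : ℕ => ∑' u : ℕ, K w n u v) := by
    refine ⟨c ^ n, ?_⟩
    rintro _ ⟨v, rfl⟩
    exact tsum_K_col_le w hw hsum c hc hc0 n v
  set S := ⨆ v : ℕ, ∑' u : ℕ, K w n u v with hS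
  have hS0 : 0 ≤ S :=
    le_trans (tsum_nonneg fun u => K_nonneg w n u 0) (le_ciSup hbddM 0)
  apply le_antisymm
  · -- upper bound
    apply ContinuousLinearMap.opNorm_le_bound _ hS0
    intro x
    rw [← norm_toBCF_eq_norm]
    refine (BoundedContinuousFunction.norm_le (mul_nonneg hS0 (norm_nonneg x))).mpr
      fun v => ?_
    show ‖((T ^ n) x) v‖ ≤ S * ‖x‖
    rw [Tpow w hw hsum c hc T hT n x v]
    have hsn : Summable fun u : ℕ => ‖x u * K w n u v‖ := by
      refine Summable.of_nonneg_of_le (fun u => norm_nonneg _) (fun u => ?_)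
        ((summable_K_col w hw hsum c hc n v).mul_left ‖x‖)
      rw [norm_mul, Real.norm_of_nonneg (K_nonneg w n u v)]
      exact mul_le_mul_of_nonneg_right
        (by rw [Real.norm_eq_abs]; exact abs_apply_le x u) (K_nonneg w n u v)
    calc ‖∑' u : ℕ, x u * K w n u v‖
        ≤ ∑' u : ℕ, ‖x u * K w n u v‖ := norm_tsum_le_tsum_norm hsn
      _ ≤ ∑' u : ℕ, ‖x‖ * K w n u v := by
          refine Summable.tsum_le_tsum (fun u => ?_) hsn
            ((summable_K_col w hw hsum c hc n v).mul_left ‖x‖)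
          rw [norm_mul, Real.norm_of_nonneg (K_nonneg w n u v)]
          exact mul_le_mul_of_nonneg_right
            (by rw [Real.norm_eq_abs]; exact abs_apply_le x u) (K_nonneg w n u v)
      _ = ‖x‖ * ∑' u : ℕ, K w n u v := tsum_mul_left
      _ ≤ ‖x‖ * S := mul_le_mul_of_nonneg_left (le_ciSup hbddM v) (norm_nonneg x)
      _ = S * ‖x‖ := mul_comm _ _
  · -- lower bound
    refine ciSup_le fun v => ?_
    refine Summable.tsum_le_of_sum_le (summable_K_col w hw hsum c hc n v) fun F => ?_
    have h1 : ((T ^ n) (indC F)) v = ∑ u ∈ F, K w n u v := by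
      rw [Tpow w hw hsum c hc T hT n (indC F) v,
        tsum_eq_sum (s := F) (fun u hu => by rw [indC_apply, if_neg hu, zero_mul])]
      exact Finset.sum_congr rfl fun u hu => by rw [indC_apply, if_pos hu, one_mul]
    calc ∑ u ∈ F, K w n u v = ((T ^ n) (indC F)) v := h1.symm
      _ ≤ |((T ^ n) (indC F)) v| := le_abs_self _
      _ ≤ ‖(T ^ n) (indC F)‖ := abs_apply_le _ v
      _ ≤ ‖T ^ n‖ * ‖indC F‖ := (T ^ n).le_opNorm _
      _ ≤ ‖T ^ n‖ * 1 :=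
          mul_le_mul_of_nonneg_left (indC_norm_le F) (ContinuousLinearMap.opNorm_nonneg _)
      _ = ‖T ^ n‖ := mul_one _
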